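/- For positive integers Λ, α, j with α ≤ Λ and 1 ≤ j ≤ Λ - α: C(Λ-α, j)/(C(Λ,j)·(C(j+α,j)-1)) · (C(Λ,α)·C(Λ,j))/C(Λ, α+j) ≤ (α+1)/α. -/

import Mathlib

theorem stmt_12 (Λ α j : ℕ) (hα : 0 < α) (hj : 1 ≤ j) (hαΛ : α ≤ Λ)
    (hjΛ : j ≤ Λ - α) :
    (Nat.choose (Λ - α) j : ℚ) /
        (Nat.choose Λ j * ((Nat.choose (j + α) j : ℚ) - 1)) *
      ((Nat.choose Λ α * Nat.choose Λ j : ℚ) / Nat.choose Λ (α + j)) ≤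
      ((α : ℚ) + 1) / α := by
  have hαjΛ : α + j ≤ Λ := by omega
  -- identity
  have hid : Nat.choose Λ (α + j) * Nat.choose (α + j) α
      = Nat.choose Λ α * Nat.choose (Λ - α) j := by
    have := Nat.choose_mul (n := Λ) (k := α + j) (s := α) (Nat.le_add_right _ _)
    simpa using this
  have hsymm : Nat.choose (α + j) α = Nat.choose (j + α) j := by
    rw [Nat.add_comm α j]
    have := Nat.choose_symm (Nat.le_add_left α j)
    simpa using this.symm
  -- bound B ≥ α + 1
  have hB : α + 1 ≤ Nat.choose (j + α) j := by
    rw [← hsymm]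
    calc α + 1 = Nat.choose (α + 1) α := (Nat.choose_succ_self_right α).symm
    _ ≤ Nat.choose (α + j) α := Nat.choose_le_choose α (by omega)
  -- positivity in ℚ
  have hA : (0:ℚ) < Nat.choose Λ j := by
    exact_mod_cast Nat.choose_pos (by omega)
  have hD : (0:ℚ) < Nat.choose Λ (α + j) := by
    exact_mod_cast Nat.choose_pos hαjΛ
  have hF : (0:ℚ) < Nat.choose Λ α := by
    exact_mod_cast Nat.choose_pos hαΛ
  have hBq : ((α:ℚ)) + 1 ≤ Nat.choose (j + α) j := by exact_mod_cast hB
  have hαq : (0:ℚ) < α := by exact_mod_cast hα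
  have hB1 : (0:ℚ) < (Nat.choose (j + α) j : ℚ) - 1 := by linarith
  have hidq : (Nat.choose Λ (α + j) : ℚ) * Nat.choose (j + α) j
      = Nat.choose Λ α * Nat.choose (Λ - α) j := by
    rw [← hsymm]; exact_mod_cast hid
  -- LHS equals B/(B-1)
  have hEq : (Nat.choose (Λ - α) j : ℚ) /
        (Nat.choose Λ j * ((Nat.choose (j + α) j : ℚ) - 1)) *
      ((Nat.choose Λ α * Nat.choose Λ j : ℚ) / Nat.choose Λ (α + j))
      = (Nat.choose (j + α) j : ℚ) / ((Nat.choose (j + α) j : ℚ) - 1) := by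
    rw [div_mul_div_comm, div_eq_div_iff (by positivity) hB1.ne']
    linear_combination (-((Nat.choose Λ j : ℚ) * ((Nat.choose (j + α) j : ℚ) - 1))) * hidq
  rw [hEq, div_le_div_iff₀ hB1 hαq]
  nlinarith [hBq, hαq]
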